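/- Fix $\epsilon \in (0,1)$, a prime $p$, an affine constraint $A = (a_1,\dots,a_m)$ in $\ell$ variables, and a polynomial factor $\mathcal{B}$ generated by polynomials $P_1,\dots,P_C : \mathbb{F}_p^n \to \mathbb{F}_p$ of degrees $d_1,\dots,d_C$ (all less than $p$). Assume the following two hypotheses hold: (1) for every coefficient matrix $\Lambda = (\lambda_{i,j})$, either $P_\Lambda(X_1,\dots,X_\ell) := \sum_{i,j}\lambda_{i,j}P_i(a_j(X_1,\dots,X_\ell))$ is the zero polynomial, or $|\mathbb{E}_{x_1,\dots,x_\ell \in \mathbb{F}_p^n}[e^{2\pi i P_\Lambda(x_1,\dots,x_\ell)/p}]| < \epsilon$; (2) $P_\Lambda \equiv 0$ iff $\sum_j \lambda_{i,j} a_j^{\otimes d_i} = 0$ for all $i$, and the number of such $\Lambda$ is $p^{mC - s}$ where $s$ is the $(d_1,\dots,d_C)$-dimension of $A$. Let $b_1,\dots,b_m \in \mathbb{F}_p^C$. If $b_1,\dots,b_m$ are consistent with respect to $A$ and $(d_1,\dots,d_C)$, then $\Pr_{x_1,\dots,x_\ell}[\mathcal{B}(a_1(x_1,\dots,x_\ell))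 = b_1 \wedge \cdots \wedge \mathcal{B}(a_m(x_1,\dots,x_\ell)) = b_m] = p^{-s} \pm \epsilon$. If they are not consistent, this probability is $0$. -/

import Mathlib

/-- The additive character `x ↦ e^{2πi x / p}` of `ZMod p`. -/
noncomputable def chi (p : ℕ) (x : ZMod p) : ℂ :=
  Complex.exp (2 * Real.pi * Complex.I * (x.val : ℂ) / (p : ℂ))

/-- The `d`-th tensor power of a linear form with coefficient vector `α`. -/
def tpow {p : ℕ} (d : ℕ) {V : Type*} (α : V → ZMod p) : (Fin d → V) → ZMod p :=
  fun i => ∏ j, α (i j)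

/-- Consistency of cells `b j` with respect to forms `a` and degrees `d`. -/
def Consistent {p ℓ m C : ℕ} (a : Fin m → Fin ℓ → ZMod p)
    (d : Fin C → ℕ) (b : Fin m → Fin C → ZMod p) : Prop :=
  ∀ lam : Fin C → Fin m → ZMod p,
    (∀ i, ∑ j, lam i j • tpow (p := p) (d i) (a j) = 0) →
    ∀ i, ∑ j, lam i j * b j i = 0

lemma chi_eq (p : ℕ) (x : ZMod p) :
    chi p x = Complex.exp (2 * Real.pi * Complex.I / p) ^ x.val := by
  rw [chi, ← Complex.exp_nat_mul]
  congr 1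
  ring

lemma chi_zero (p : ℕ) [NeZero p] : chi p (0 : ZMod p) = 1 := by
  rw [chi_eq, ZMod.val_zero, pow_zero]

lemma zeta_pow_mod (ζ : ℂ) {p : ℕ} (h : ζ ^ p = 1) (k : ℕ) : ζ ^ (k % p) = ζ ^ k := by
  conv_rhs => rw [← Nat.div_add_mod k p, pow_add, pow_mul, h, one_pow, one_mul]

lemma chi_add {p : ℕ} [NeZero p] (x y : ZMod p) :
    chi p (x + y) = chi p x * chi p y := by
  have hζ : IsPrimitiveRoot (Complex.exp (2 * Real.pi * Complex.I / p)) p :=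
    Complex.isPrimitiveRoot_exp p (NeZero.ne p)
  rw [chi_eq, chi_eq, chi_eq, ZMod.val_add, zeta_pow_mod _ hζ.pow_eq_one, pow_add]

lemma chi_sum {p : ℕ} [NeZero p] {ι : Type*} (s : Finset ι) (f : ι → ZMod p) :
    chi p (∑ i ∈ s, f i) = ∏ i ∈ s, chi p (f i) := by
  induction s using Finset.cons_induction with
  | empty => simp [chi_zero]
  | cons a s h ih => rw [Finset.sum_cons, Finset.prod_cons, chi_add, ih]

lemma chi_abs {p : ℕ} (x : ZMod p) : ‖chi p x‖ = 1 := by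
  rw [chi, Complex.norm_exp]
  norm_num

lemma chi_orth {p : ℕ} [Fact p.Prime] (y : ZMod p) :
    ∑ t : ZMod p, chi p (t * y) = if y = 0 then (p : ℂ) else 0 := by
  have hp : p.Prime := Fact.out
  have hζ : IsPrimitiveRoot (Complex.exp (2 * Real.pi * Complex.I / p)) p :=
    Complex.isPrimitiveRoot_exp p (NeZero.ne p)
  split_ifs with h
  · subst h
    simp [chi_zero, Finset.card_univ, ZMod.card]
  · have he := Fintype.sum_equiv (Equiv.mulRight₀ y (fun hy0 => h hy0))
      (fun t => chi p (t * y)) (chi p) (fun t => rfl)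
    rw [he]
    have h2 : ∑ u : ZMod p, chi p u
        = ∑ k ∈ Finset.range p, Complex.exp (2 * Real.pi * Complex.I / p) ^ k := by
      refine Finset.sum_nbij' (fun u => u.val) (fun k => (k : ZMod p)) ?_ ?_ ?_ ?_ ?_ <;>
        intro u hu
      · exact Finset.mem_range.mpr (ZMod.val_lt u)
      · exact Finset.mem_univ _
      · exact ZMod.natCast_rightInverse u
      · exact ZMod.val_cast_of_lt (Finset.mem_range.mp hu)
      · exact chi_eq p u
    rw [h2, hζ.geom_sum_eq_zero hp.one_lt]

lemma sum_prod_exchange {ι α β : Type*} [Fintype ι] [DecidableEq ι] [Fintype α]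
    [CommSemiring β] (g : ι → α → β) :
    ∑ f : ι → α, ∏ i, g i (f i) = ∏ i, ∑ t : α, g i t := by
  rw [Finset.prod_univ_sum, Fintype.piFinset_univ]

open Finset in
lemma indicator_sum {p : ℕ} [Fact p.Prime] {C m : ℕ} (c : Fin C → Fin m → ZMod p) :
    ∑ lam : Fin C → Fin m → ZMod p, chi p (∑ i, ∑ j, lam i j * c i j)
      = if (∀ i j, c i j = 0) then ((p : ℂ)) ^ (m * C) else 0 := by
  classical
  have h1 : ∀ lam : Fin C → Fin m → ZMod p,
      chi p (∑ i, ∑ j, lam i j * c i j) = ∏ i, ∏ j, chi p (lam i j * c i j) := fun lam => by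
    rw [chi_sum]; exact Finset.prod_congr rfl fun i _ => chi_sum _ _
  simp_rw [h1]
  rw [sum_prod_exchange (g := fun i (r : Fin m → ZMod p) => ∏ j, chi p (r j * c i j))]
  have h2 : ∀ i, ∑ r : Fin m → ZMod p, ∏ j, chi p (r j * c i j)
      = ∏ j, if c i j = 0 then (p : ℂ) else 0 := fun i => by
    rw [sum_prod_exchange (g := fun j (t : ZMod p) => chi p (t * c i j))]
    exact Finset.prod_congr rfl fun j _ => chi_orth _
  simp_rw [h2]
  by_cases h : ∀ i j, c i j = 0
  · simp only [if_pos h]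
    calc ∏ i : Fin C, ∏ j : Fin m, (if c i j = 0 then (p:ℂ) else 0)
        = ∏ _i : Fin C, ∏ _j : Fin m, (p:ℂ) :=
          Finset.prod_congr rfl fun i _ => Finset.prod_congr rfl fun j _ => if_pos (h i j)
      _ = ((p:ℂ) ^ m) ^ C := by simp
      _ = (p:ℂ) ^ (m * C) := by rw [← pow_mul]
  · rw [if_neg h]
    push_neg at h
    obtain ⟨i, j, hij⟩ := h
    exact Finset.prod_eq_zero (mem_univ i)
      (Finset.prod_eq_zero (mem_univ j) (if_neg hij))


/-- Near-orthogonality counting of cell patterns: under the bias hypothesis on nonvanishing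
combinations `P_Λ` and the characterization and count of the vanishing `Λ`'s, the probability
that `𝓑(a_j(x)) = b_j` for all `j` is `p^{-s} ± ε` when `b₁,…,b_m` are consistent, and `0`
otherwise. -/
theorem pattern_density {p n C ℓ m : ℕ} [Fact p.Prime] (hℓ : 0 < ℓ)
    (ε : ℝ) (hε : ε ∈ Set.Ioo (0 : ℝ) 1)
    (a : Fin m → Fin ℓ → ZMod p) (hcoef1 : ∀ j : Fin m, a j ⟨0, hℓ⟩ = 1)
    (P : Fin C → (Fin n → ZMod p) → ZMod p)
    (d : Fin C → ℕ) (hd : ∀ i, 0 < d i) (hdp : ∀ i, d i < p)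
    (s : ℕ)
    (hs : s = ∑ i, Module.finrank (ZMod p)
      (Submodule.span (ZMod p) (Set.range fun j => tpow (p := p) (d i) (a j))))
    (hbias : ∀ lam : Fin C → Fin m → ZMod p,
      (∀ x : Fin ℓ → Fin n → ZMod p,
          ∑ i, ∑ j, lam i j * P i (fun t => ∑ k, a j k * x k t) = 0) ∨
      ‖(∑ x : Fin ℓ → Fin n → ZMod p,
          chi p (∑ i, ∑ j, lam i j * P i (fun t => ∑ k, a j k * x k t))) /
            ((p : ℂ) ^ (n * ℓ))‖ < ε)
    (hzero : ∀ lam : Fin C → Fin m → ZMod p,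
      (∀ x : Fin ℓ → Fin n → ZMod p,
          ∑ i, ∑ j, lam i j * P i (fun t => ∑ k, a j k * x k t) = 0) ↔
        ∀ i, ∑ j, lam i j • tpow (p := p) (d i) (a j) = 0)
    (hcount : Nat.card {lam : Fin C → Fin m → ZMod p //
        ∀ x : Fin ℓ → Fin n → ZMod p,
          ∑ i, ∑ j, lam i j * P i (fun t => ∑ k, a j k * x k t) = 0}
      = p ^ (m * C - s))
    (b : Fin m → Fin C → ZMod p) :
    (Consistent a d b →
      |(Nat.card {x : Fin ℓ → Fin n → ZMod p //
            ∀ j i, P i (fun t => ∑ k, a j k * x k t) = b j i} : ℝ) / (p : ℝ) ^ (n * ℓ)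
          - 1 / (p : ℝ) ^ s| ≤ ε)
    ∧ (¬ Consistent a d b →
      (Nat.card {x : Fin ℓ → Fin n → ZMod p //
          ∀ j i, P i (fun t => ∑ k, a j k * x k t) = b j i} : ℝ) / (p : ℝ) ^ (n * ℓ) = 0) := by
  classical
  have hp : p.Prime := Fact.out
  have hpR : (0:ℝ) < p := by exact_mod_cast hp.pos
  -- names
  set Q : (Fin ℓ → Fin n → ZMod p) → Prop :=
    fun x => ∀ j i, P i (fun t => ∑ k, a j k * x k t) = b j i with hQ
  set Zp : (Fin C → Fin m → ZMod p) → Prop :=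
    fun lam => ∀ x : Fin ℓ → Fin n → ZMod p,
      ∑ i, ∑ j, lam i j * P i (fun t => ∑ k, a j k * x k t) = 0 with hZp
  constructor
  · -- consistent case
    intro hb
    have hsle : s ≤ m * C := by
      rw [hs]
      calc ∑ i, Module.finrank (ZMod p)
            (Submodule.span (ZMod p) (Set.range fun j => tpow (p := p) (d i) (a j)))
          ≤ ∑ _i : Fin C, m := by
            refine Finset.sum_le_sum fun i _ => ?_
            simpa [Set.finrank] using
              finrank_range_le_card (R := ZMod p) (fun j => tpow (p := p) (d i) (a j))
        _ = m * C := by simp [mul_comm]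
    -- card of the x-space
    have hcardX : Fintype.card (Fin ℓ → Fin n → ZMod p) = p ^ (n * ℓ) := by
      simp [ZMod.card, ← pow_mul]
    have hcardT : Fintype.card (Fin C → Fin m → ZMod p) = p ^ (m * C) := by
      simp [ZMod.card, ← pow_mul]
    -- counting as a complex sum
    have hcardQ : ((Nat.card {x : Fin ℓ → Fin n → ZMod p // Q x} : ℕ) : ℂ)
        = ∑ x : Fin ℓ → Fin n → ZMod p, (if Q x then (1:ℂ) else 0) := by
      rw [Nat.card_eq_fintype_card, Fintype.card_subtype, Finset.card_filter]
      push_cast [apply_ite (Nat.cast : ℕ → ℂ)]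
      rfl
    -- key Fourier identity
    have key : ∑ lam : Fin C → Fin m → ZMod p,
        chi p (- ∑ i, ∑ j, lam i j * b j i) *
          (∑ x : Fin ℓ → Fin n → ZMod p,
            chi p (∑ i, ∑ j, lam i j * P i (fun t => ∑ k, a j k * x k t)))
        = ((Nat.card {x : Fin ℓ → Fin n → ZMod p // Q x} : ℕ) : ℂ) * (p:ℂ) ^ (m * C) := by
      calc ∑ lam : Fin C → Fin m → ZMod p,
            chi p (- ∑ i, ∑ j, lam i j * b j i) *
              (∑ x : Fin ℓ → Fin n → ZMod p,
                chi p (∑ i, ∑ j, lam i j * P i (fun t => ∑ k, a j k * x k t)))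
          = ∑ lam : Fin C → Fin m → ZMod p, ∑ x : Fin ℓ → Fin n → ZMod p,
              chi p (∑ i, ∑ j, lam i j *
                (P i (fun t => ∑ k, a j k * x k t) - b j i)) := by
            refine Finset.sum_congr rfl fun lam _ => ?_
            rw [Finset.mul_sum]
            refine Finset.sum_congr rfl fun x _ => ?_
            rw [← chi_add]
            congr 1
            simp only [mul_sub, Finset.sum_sub_distrib]
            ring
        _ = ∑ x : Fin ℓ → Fin n → ZMod p, ∑ lam : Fin C → Fin m → ZMod p,
              chi p (∑ i, ∑ j, lam i j *
                (P i (fun t => ∑ k, a j k * x k t) - b j i)) := Finset.sum_comm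
        _ = ∑ x : Fin ℓ → Fin n → ZMod p, (if Q x then ((p:ℂ)) ^ (m * C) else 0) := by
            refine Finset.sum_congr rfl fun x _ => ?_
            rw [indicator_sum (fun i j => P i (fun t => ∑ k, a j k * x k t) - b j i)]
            refine if_congr ?_ rfl rfl
            constructor
            · intro h j i; have := h i j; rwa [sub_eq_zero] at this
            · intro h i j; rw [sub_eq_zero]; exact h j i
        _ = ((Nat.card {x : Fin ℓ → Fin n → ZMod p // Q x} : ℕ) : ℂ) * (p:ℂ) ^ (m * C) := by
            rw [hcardQ, Finset.sum_mul]
            refine Finset.sum_congr rfl fun x _ => ?_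
            by_cases h : Q x <;> simp [h]
    -- split the lam-sum into vanishing and nonvanishing parts
    have hsplit := (Finset.sum_filter_add_sum_filter_not Finset.univ Zp
      (fun lam => chi p (- ∑ i, ∑ j, lam i j * b j i) *
        (∑ x : Fin ℓ → Fin n → ZMod p,
          chi p (∑ i, ∑ j, lam i j * P i (fun t => ∑ k, a j k * x k t))))).symm
    -- the vanishing part
    have hZcard : ((Finset.univ.filter Zp).card : ℂ) = (p:ℂ) ^ (m * C - s) := by
      have : Nat.card {lam : Fin C → Fin m → ZMod p // Zp lam}
          = (Finset.univ.filter Zp).card := by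
        rw [Nat.card_eq_fintype_card, Fintype.card_subtype]
      rw [← this, hcount]
      push_cast
      rfl
    have hmain : ∀ lam ∈ Finset.univ.filter Zp,
        chi p (- ∑ i, ∑ j, lam i j * b j i) *
          (∑ x : Fin ℓ → Fin n → ZMod p,
            chi p (∑ i, ∑ j, lam i j * P i (fun t => ∑ k, a j k * x k t)))
        = (p:ℂ) ^ (n * ℓ) := by
      intro lam hlam
      have hZ : Zp lam := (Finset.mem_filter.mp hlam).2
      have hrow : ∀ i, ∑ j, lam i j * b j i = 0 := hb lam ((hzero lam).mp hZ)
      have hB : (∑ i, ∑ j, lam i j * b j i) = 0 := by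
        rw [Finset.sum_eq_zero fun i _ => hrow i]
      have hS : (∑ x : Fin ℓ → Fin n → ZMod p,
          chi p (∑ i, ∑ j, lam i j * P i (fun t => ∑ k, a j k * x k t)))
          = (p:ℂ) ^ (n * ℓ) := by
        rw [Finset.sum_congr rfl fun x _ => by rw [hZ x, chi_zero]]
        simp [Finset.card_univ, hcardX]
      rw [hB, neg_zero, chi_zero, one_mul, hS]
    have hvan : ∑ lam ∈ Finset.univ.filter Zp,
        chi p (- ∑ i, ∑ j, lam i j * b j i) *
          (∑ x : Fin ℓ → Fin n → ZMod p,
            chi p (∑ i, ∑ j, lam i j * P i (fun t => ∑ k, a j k * x k t)))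
        = (p:ℂ) ^ (m * C - s) * (p:ℂ) ^ (n * ℓ) := by
      rw [Finset.sum_congr rfl hmain, Finset.sum_const, nsmul_eq_mul, hZcard]
    -- the error term bound
    set E : ℂ := ∑ lam ∈ Finset.univ.filter (fun lam => ¬ Zp lam),
        chi p (- ∑ i, ∑ j, lam i j * b j i) *
          (∑ x : Fin ℓ → Fin n → ZMod p,
            chi p (∑ i, ∑ j, lam i j * P i (fun t => ∑ k, a j k * x k t))) with hE
    have hEbound : ‖E‖ ≤ (p:ℝ) ^ (m * C) * (ε * (p:ℝ) ^ (n * ℓ)) := by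
      have h1 : ‖E‖ ≤ ∑ lam ∈ Finset.univ.filter (fun lam => ¬ Zp lam),
          ‖(chi p (- ∑ i, ∑ j, lam i j * b j i) *
            (∑ x : Fin ℓ → Fin n → ZMod p,
              chi p (∑ i, ∑ j, lam i j * P i (fun t => ∑ k, a j k * x k t))))‖ :=
        norm_sum_le _ _
      have h2 : ∀ lam ∈ Finset.univ.filter (fun lam => ¬ Zp lam),
          ‖(chi p (- ∑ i, ∑ j, lam i j * b j i) *
            (∑ x : Fin ℓ → Fin n → ZMod p,
              chi p (∑ i, ∑ j, lam i j * P i (fun t => ∑ k, a j k * x k t))))‖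
          ≤ ε * (p:ℝ) ^ (n * ℓ) := by
        intro lam hlam
        have hnZ : ¬ Zp lam := (Finset.mem_filter.mp hlam).2
        have hbb := (hbias lam).resolve_left hnZ
        rw [norm_div, norm_pow, Complex.norm_natCast, div_lt_iff₀ (pow_pos hpR _)] at hbb
        rw [norm_mul, chi_abs, one_mul]
        exact le_of_lt hbb
      calc ‖E‖ ≤ ∑ lam ∈ Finset.univ.filter (fun lam => ¬ Zp lam),
            ‖(chi p (- ∑ i, ∑ j, lam i j * b j i) *
              (∑ x : Fin ℓ → Fin n → ZMod p,
                chi p (∑ i, ∑ j, lam i j * P i (fun t => ∑ k, a j k * x k t))))‖ := h1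
        _ ≤ ∑ _lam ∈ Finset.univ.filter (fun lam => ¬ Zp lam), (ε * (p:ℝ) ^ (n * ℓ)) :=
            Finset.sum_le_sum h2
        _ = ((Finset.univ.filter (fun lam => ¬ Zp lam)).card : ℝ) * (ε * (p:ℝ) ^ (n * ℓ)) := by
            rw [Finset.sum_const, nsmul_eq_mul]
        _ ≤ (p:ℝ) ^ (m * C) * (ε * (p:ℝ) ^ (n * ℓ)) := by
            have hcle : (Finset.univ.filter (fun lam => ¬ Zp lam)).card ≤ p ^ (m * C) := by
              calc (Finset.univ.filter (fun lam => ¬ Zp lam)).card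
                  ≤ Finset.univ.card := Finset.card_filter_le _ _
                _ = p ^ (m * C) := by rw [Finset.card_univ, hcardT]
            have : ((Finset.univ.filter (fun lam => ¬ Zp lam)).card : ℝ) ≤ (p:ℝ) ^ (m * C) := by
              exact_mod_cast hcle
            have hpos : (0:ℝ) ≤ ε * (p:ℝ) ^ (n * ℓ) := mul_nonneg hε.1.le (pow_pos hpR _).le
            exact mul_le_mul_of_nonneg_right this hpos
    -- combine into the complex identity
    have hiden : ((Nat.card {x : Fin ℓ → Fin n → ZMod p // Q x} : ℕ) : ℂ) * (p:ℂ) ^ (m * C)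
        - (p:ℂ) ^ (m * C - s) * (p:ℂ) ^ (n * ℓ) = E := by
      rw [← key, hsplit, hvan, hE]
      ring
    -- transfer to the reals
    set K : ℝ := (Nat.card {x : Fin ℓ → Fin n → ZMod p // Q x} : ℝ) with hK
    have hreal : |K * (p:ℝ) ^ (m * C) - (p:ℝ) ^ (m * C - s) * (p:ℝ) ^ (n * ℓ)|
        ≤ (p:ℝ) ^ (m * C) * (ε * (p:ℝ) ^ (n * ℓ)) := by
      have hcast : ((K * (p:ℝ) ^ (m * C) - (p:ℝ) ^ (m * C - s) * (p:ℝ) ^ (n * ℓ) : ℝ) : ℂ)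
          = E := by
        push_cast [hK]
        rw [← hiden]
      calc |K * (p:ℝ) ^ (m * C) - (p:ℝ) ^ (m * C - s) * (p:ℝ) ^ (n * ℓ)|
          = ‖((K * (p:ℝ) ^ (m * C) - (p:ℝ) ^ (m * C - s) * (p:ℝ) ^ (n * ℓ) : ℝ) : ℂ)‖ := by
            rw [Complex.norm_real, Real.norm_eq_abs]
        _ = ‖E‖ := by rw [hcast]
        _ ≤ _ := hEbound
    -- final arithmetic
    have hMpos : (0:ℝ) < (p:ℝ) ^ (m * C) := pow_pos hpR _
    have hNpos : (0:ℝ) < (p:ℝ) ^ (n * ℓ) := pow_pos hpR _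
    have hspos : (0:ℝ) < (p:ℝ) ^ s := pow_pos hpR _
    have hdiff : K / (p:ℝ) ^ (n * ℓ) - 1 / (p:ℝ) ^ s
        = (K * (p:ℝ) ^ (m * C) - (p:ℝ) ^ (m * C - s) * (p:ℝ) ^ (n * ℓ))
          / ((p:ℝ) ^ (m * C) * (p:ℝ) ^ (n * ℓ)) := by
      have hsub : (p:ℝ) ^ (m * C - s) = (p:ℝ) ^ (m * C) / (p:ℝ) ^ s :=
        pow_sub₀ _ (ne_of_gt hpR) hsle
      have hsub' : (p:ℝ) ^ s * (p:ℝ) ^ (m * C - s) = (p:ℝ) ^ (m * C) := by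
        rw [← pow_add, Nat.add_sub_of_le hsle]
      field_simp [hsub]
      linear_combination ((p:ℝ) ^ (n * ℓ)) * hsub'
    rw [hdiff, abs_div, abs_of_pos (mul_pos hMpos hNpos)]
    rw [div_le_iff₀ (mul_pos hMpos hNpos)]
    calc |K * (p:ℝ) ^ (m * C) - (p:ℝ) ^ (m * C - s) * (p:ℝ) ^ (n * ℓ)|
        ≤ (p:ℝ) ^ (m * C) * (ε * (p:ℝ) ^ (n * ℓ)) := hreal
      _ = ε * ((p:ℝ) ^ (m * C) * (p:ℝ) ^ (n * ℓ)) := by ring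
  · -- inconsistent case
    intro hnc
    have hempty : ∀ x : Fin ℓ → Fin n → ZMod p, ¬ Q x := by
      intro x hx
      apply hnc
      intro lam hlam i0
      set lam' : Fin C → Fin m → ZMod p :=
        fun i j => if i = i0 then lam i0 j else 0 with hlam'
      have hrows : ∀ i, ∑ j, lam' i j • tpow (p := p) (d i) (a j) = 0 := by
        intro i
        by_cases h : i = i0
        · subst h; simpa [hlam'] using hlam i
        · simp [hlam', h]
      have hvanish := (hzero lam').mpr hrows x
      have hcompute : ∑ i, ∑ j, lam' i j * P i (fun t => ∑ k, a j k * x k t)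
          = ∑ j, lam i0 j * b j i0 := by
        rw [Finset.sum_eq_single_of_mem i0 (Finset.mem_univ _)
          (fun i _ hne => by simp [hlam', hne])]
        refine Finset.sum_congr rfl fun j _ => ?_
        rw [hlam']
        simp [hx j i0]
      rw [hcompute] at hvanish
      exact hvanish
    have : IsEmpty {x : Fin ℓ → Fin n → ZMod p // Q x} :=
      ⟨fun ⟨x, hx⟩ => hempty x hx⟩
    rw [Nat.card_of_isEmpty]
    norm_num
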